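/- For every ∀⁺ type A of System F, the interpretation of A using saturated sets (closed under weak-head-expansion) coincides with the interpretation using β-saturated sets (closed under β-expansion): the two resulting sets |A| are equal. -/

import Mathlib

/-! Untyped λ-calculus (de Bruijn) and System F realizability semantics. -/

/-- Untyped λ-terms in de Bruijn notation. -/
inductive Lam : Type
  | var : ℕ → Lam
  | app : Lam → Lam → Lam
  | lam : Lam → Lam
deriving DecidableEq

namespace Lam

/-- Shift the free variables ≥ `d` up by one. -/
def lift (d : ℕ) : Lam → Lam
  | var n => if n < d then var n else var (n + 1)
  | app t u => app (lift d t) (lift d u)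
  | lam t => lam (lift (d + 1) t)

/-- Capture-avoiding substitution of `u` for the variable `k` (de Bruijn). -/
def subst : Lam → ℕ → Lam → Lam
  | var n, k, u => if n = k then u else if k < n then var (n - 1) else var n
  | app t s, k, u => app (subst t k u) (subst s k u)
  | lam t, k, u => lam (subst t (k + 1) (lift 0 u))

/-- Free variables of a term. -/
def fv : Lam → Finset ℕ
  | var n => {n}
  | app t u => fv t ∪ fv u
  | lam t => ((fv t).erase 0).image (· - 1)

/-- One-step β-reduction. -/
inductive Beta : Lam → Lam → Prop
  | beta (t u : Lam) : Beta (app (lam t) u) (subst t 0 u)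
  | appL {t t' : Lam} (u : Lam) : Beta t t' → Beta (app t u) (app t' u)
  | appR (t : Lam) {u u' : Lam} : Beta u u' → Beta (app t u) (app t u')
  | lam {t t' : Lam} : Beta t t' → Beta (lam t) (lam t')

/-- Many-step β-reduction. -/
def BetaStar : Lam → Lam → Prop := Relation.ReflTransGen Beta

/-- β-equivalence. -/
def BetaEq : Lam → Lam → Prop := Relation.EqvGen Beta

/-- One-step η-reduction. -/
inductive Eta : Lam → Lam → Prop
  | eta (t : Lam) : Eta (lam (app (lift 0 t) (var 0))) t
  | appL {t t' : Lam} (u : Lam) : Eta t t' → Eta (app t u) (app t' u)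
  | appR (t : Lam) {u u' : Lam} : Eta u u' → Eta (app t u) (app t u')
  | lam {t t' : Lam} : Eta t t' → Eta (lam t) (lam t')

/-- βη-equivalence. -/
def BetaEtaEq : Lam → Lam → Prop := Relation.EqvGen (fun t u => Beta t u ∨ Eta t u)

/-- One-step weak head reduction: contracts the weak head redex `(λ t) u`
possibly applied to further arguments. -/
inductive Whr : Lam → Lam → Prop
  | head (t u : Lam) : Whr (app (lam t) u) (subst t 0 u)
  | appL {t t' : Lam} (u : Lam) : Whr t t' → Whr (app t u) (app t' u)

/-- Many-step weak head reduction (`≻_f`). -/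
def WhrStar : Lam → Lam → Prop := Relation.ReflTransGen Whr

/-- A term is normal when it has no β-redex. -/
def Normal (t : Lam) : Prop := ∀ u, ¬ Beta t u

def Normalizable (t : Lam) : Prop := ∃ u, BetaStar t u ∧ Normal u

/-- `(t)v₁…vₘ`. -/
def appList (t : Lam) (l : List Lam) : Lam := l.foldl app t

end Lam

/-- A set of λ-terms is saturated when it is closed under weak-head-expansion. -/
def Saturated (G : Set Lam) : Prop := ∀ t u : Lam, Lam.WhrStar t u → u ∈ G → t ∈ G

/-- A set of λ-terms is β-saturated when it is closed under β-expansion. -/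
def BetaSaturated (G : Set Lam) : Prop := ∀ t u : Lam, Lam.BetaStar t u → u ∈ G → t ∈ G

/-- `G → G' = {u : ∀ t ∈ G, (u)t ∈ G'}`. -/
def arrowSet (G G' : Set Lam) : Set Lam := {u | ∀ t ∈ G, Lam.app u t ∈ G'}

/-- Types of System F (de Bruijn type variables). -/
inductive Ty : Type
  | var : ℕ → Ty
  | arr : Ty → Ty → Ty
  | all : Ty → Ty
deriving DecidableEq

namespace Ty

/-- Shift the free type variables ≥ `d` up by one. -/
def lift (d : ℕ) : Ty → Ty
  | var n => if n < d then var n else var (n + 1)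
  | arr A B => arr (lift d A) (lift d B)
  | all A => all (lift (d + 1) A)

/-- Capture-avoiding substitution of the type `C` for the type variable `k`. -/
def subst : Ty → ℕ → Ty → Ty
  | var n, k, C => if n = k then C else if k < n then var (n - 1) else var n
  | arr A B, k, C => arr (subst A k C) (subst B k C)
  | all A, k, C => all (subst A (k + 1) (lift 0 C))

/-- Free type variables. -/
def fv : Ty → Finset ℕ
  | var n => {n}
  | arr A B => fv A ∪ fv B
  | all A => ((fv A).erase 0).image (· - 1)

end Ty

mutual
  /-- ∀⁺ types: types with positive quantifiers. -/
  inductive PosTy : Ty → Prop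
    | var (n : ℕ) : PosTy (Ty.var n)
    | arr {B A : Ty} : NegTy B → PosTy A → PosTy (Ty.arr B A)
    | all {A : Ty} : PosTy A → 0 ∈ A.fv → PosTy (Ty.all A)
  /-- ∀⁻ types: types with negative quantifiers. -/
  inductive NegTy : Ty → Prop
    | var (n : ℕ) : NegTy (Ty.var n)
    | arr {B A : Ty} : PosTy B → NegTy A → NegTy (Ty.arr B A)
end

/-- Typing contexts: a partial assignment of types to (de Bruijn) term variables. -/
def Ctx : Type := ℕ → Option Ty

def Ctx.empty : Ctx := fun _ => none

def Ctx.cons (B : Ty) (Γ : Ctx) : Ctx := fun n =>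
  match n with
  | 0 => some B
  | n + 1 => Γ n

/-- Shift all type variables of a context (used for ∀-introduction: the fresh
type variable `0` does not occur in the shifted context). -/
def Ctx.liftTy (Γ : Ctx) : Ctx := fun n => (Γ n).map (Ty.lift 0)

/-- Curry-style typing of System F. -/
inductive TyJ : Ctx → Lam → Ty → Prop
  | var {Γ : Ctx} {x : ℕ} {A : Ty} : Γ x = some A → TyJ Γ (Lam.var x) A
  | lam {Γ : Ctx} {B C : Ty} {t : Lam} :
      TyJ (Ctx.cons B Γ) t C → TyJ Γ (Lam.lam t) (Ty.arr B C)
  | app {Γ : Ctx} {B C : Ty} {u v : Lam} :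
      TyJ Γ u (Ty.arr B C) → TyJ Γ v B → TyJ Γ (Lam.app u v) C
  | allI {Γ : Ctx} {A : Ty} {t : Lam} :
      TyJ (Ctx.liftTy Γ) t A → TyJ Γ t (Ty.all A)
  | allE {Γ : Ctx} {A : Ty} {t : Lam} (C : Ty) :
      TyJ Γ t (Ty.all A) → TyJ Γ t (Ty.subst A 0 C)

/-- System F0 : System F where ∀-elimination only instantiates by type variables. -/
inductive TyJ0 : Ctx → Lam → Ty → Prop
  | var {Γ : Ctx} {x : ℕ} {A : Ty} : Γ x = some A → TyJ0 Γ (Lam.var x) A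
  | lam {Γ : Ctx} {B C : Ty} {t : Lam} :
      TyJ0 (Ctx.cons B Γ) t C → TyJ0 Γ (Lam.lam t) (Ty.arr B C)
  | app {Γ : Ctx} {B C : Ty} {u v : Lam} :
      TyJ0 Γ u (Ty.arr B C) → TyJ0 Γ v B → TyJ0 Γ (Lam.app u v) C
  | allI {Γ : Ctx} {A : Ty} {t : Lam} :
      TyJ0 (Ctx.liftTy Γ) t A → TyJ0 Γ t (Ty.all A)
  | allE {Γ : Ctx} {A : Ty} {t : Lam} (Y : ℕ) :
      TyJ0 Γ t (Ty.all A) → TyJ0 Γ t (Ty.subst A 0 (Ty.var Y))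

/-- Interpretations: assignments of sets of λ-terms to type variables. -/
def Interp : Type := ℕ → Set Lam

def Interp.cons (G : Set Lam) (I : Interp) : Interp := fun n =>
  match n with
  | 0 => G
  | n + 1 => I n

/-- Interpretation of types, parameterized by the admissibility class `C` of
sets used to interpret type variables (e.g. `Saturated`). -/
def interpC (C : Set Lam → Prop) : Ty → Interp → Set Lam
  | Ty.var n, I => I n
  | Ty.arr A B, I => arrowSet (interpC C A I) (interpC C B I)
  | Ty.all A, I => ⋂ (G : Set Lam) (_ : C G), interpC C A (Interp.cons G I)

/-- Girard–Krivine interpretation `|A|_I` with saturated sets. -/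
def interp : Ty → Interp → Set Lam := interpC Saturated

/-- `|A|`, the intersection of `|A|_I` over all admissible interpretations. -/
def SemC (C : Set Lam → Prop) (A : Ty) : Set Lam :=
  {t | ∀ I : Interp, (∀ n, C (I n)) → t ∈ interpC C A I}

/-- `|A| = ⋂_I |A|_I` over interpretations into saturated sets. -/
def Sem (A : Ty) : Set Lam := SemC Saturated A
namespace Lam

/-! ### Renamings and simultaneous substitutions -/

/-- binder adjustment for renamings -/
def upr (ρ : ℕ → ℕ) : ℕ → ℕ := fun n => match n with | 0 => 0 | n+1 => ρ n + 1

def rename (ρ : ℕ → ℕ) : Lam → Lam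
  | var n => var (ρ n)
  | app t u => app (rename ρ t) (rename ρ u)
  | lam t => lam (rename (upr ρ) t)

/-- binder adjustment for substitutions -/
def ups (σ : ℕ → Lam) : ℕ → Lam :=
  fun n => match n with | 0 => var 0 | n+1 => rename Nat.succ (σ n)

def msubst (σ : ℕ → Lam) : Lam → Lam
  | var n => σ n
  | app t u => app (msubst σ t) (msubst σ u)
  | lam t => lam (msubst (ups σ) t)

theorem rename_ext {ρ ρ' : ℕ → ℕ} (t : Lam) (h : ∀ n, ρ n = ρ' n) :
    rename ρ t = rename ρ' t := by
  induction t generalizing ρ ρ' with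
  | var n => simp [rename, h]
  | app a b iha ihb => simp [rename]; exact ⟨iha h, ihb h⟩
  | lam a ih =>
      simp only [rename, lam.injEq]
      apply ih
      intro n; cases n <;> simp [upr, h]

theorem msubst_ext {σ σ' : ℕ → Lam} (t : Lam) (h : ∀ n, σ n = σ' n) :
    msubst σ t = msubst σ' t := by
  induction t generalizing σ σ' with
  | var n => simp [msubst, h]
  | app a b iha ihb => simp [msubst]; exact ⟨iha h, ihb h⟩
  | lam a ih =>
      simp only [msubst, lam.injEq]
      apply ih
      intro n; cases n <;> simp [ups, h]

theorem rename_rename (ρ ρ' : ℕ → ℕ) (t : Lam) :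
    rename ρ' (rename ρ t) = rename (fun n => ρ' (ρ n)) t := by
  induction t generalizing ρ ρ' with
  | var n => rfl
  | app a b iha ihb => simp [rename, iha, ihb]
  | lam a ih =>
      simp only [rename, lam.injEq]
      rw [ih]
      apply rename_ext
      intro n; cases n <;> simp [upr]

theorem msubst_rename (ρ : ℕ → ℕ) (σ : ℕ → Lam) (t : Lam) :
    msubst σ (rename ρ t) = msubst (fun n => σ (ρ n)) t := by
  induction t generalizing ρ σ with
  | var n => rfl
  | app a b iha ihb => simp [rename, msubst, iha, ihb]
  | lam a ih =>
      simp only [rename, msubst, lam.injEq]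
      rw [ih]
      apply msubst_ext
      intro n; cases n <;> simp [upr, ups]

theorem rename_msubst (ρ : ℕ → ℕ) (σ : ℕ → Lam) (t : Lam) :
    rename ρ (msubst σ t) = msubst (fun n => rename ρ (σ n)) t := by
  induction t generalizing ρ σ with
  | var n => rfl
  | app a b iha ihb => simp [rename, msubst, iha, ihb]
  | lam a ih =>
      simp only [rename, msubst, lam.injEq]
      rw [ih]
      apply msubst_ext
      intro n
      cases n with
      | zero => rfl
      | succ n =>
          simp only [ups, rename_rename]
          apply rename_ext
          intro m; simp [upr]

theorem msubst_msubst (σ σ' : ℕ → Lam) (t : Lam) :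
    msubst σ' (msubst σ t) = msubst (fun n => msubst σ' (σ n)) t := by
  induction t generalizing σ σ' with
  | var n => rfl
  | app a b iha ihb => simp [msubst, iha, ihb]
  | lam a ih =>
      simp only [msubst, lam.injEq]
      rw [ih]
      apply msubst_ext
      intro n
      cases n with
      | zero => rfl
      | succ n =>
          simp [ups, msubst_rename, rename_msubst]

theorem msubst_var (t : Lam) : msubst var t = t := by
  induction t with
  | var n => rfl
  | app a b iha ihb => simp [msubst, iha, ihb]
  | lam a ih =>
      simp only [msubst, lam.injEq]
      rw [show msubst (ups var) a = msubst var a from msubst_ext _ (by intro n; cases n <;> rfl), ih]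

/-- `lift d` is a renaming. -/
theorem lift_eq_rename (d : ℕ) (t : Lam) :
    lift d t = rename (fun n => if n < d then n else n + 1) t := by
  induction t generalizing d with
  | var n => simp only [lift, rename]; split <;> simp_all
  | app a b iha ihb => simp [lift, rename, iha, ihb]
  | lam a ih =>
      simp only [lift, rename, lam.injEq]
      rw [ih]
      apply rename_ext
      intro n
      cases n with
      | zero => simp [upr]
      | succ n =>
          simp only [upr]
          by_cases h : n < d <;> simp [h, Nat.succ_lt_succ_iff]

theorem lift0_eq_rename (t : Lam) : lift 0 t = rename Nat.succ t := by
  rw [lift_eq_rename]; apply rename_ext; intro n; simp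

/-- cons for substitutions -/
def scons (u : Lam) (σ : ℕ → Lam) : ℕ → Lam :=
  fun n => match n with | 0 => u | n+1 => σ n

/-- the one-variable substitution at level `k` as a simultaneous substitution -/
def sfor (k : ℕ) (u : Lam) : ℕ → Lam :=
  fun n => if n = k then u else if k < n then var (n-1) else var n

theorem subst_eq_msubst (t : Lam) (k : ℕ) (u : Lam) :
    subst t k u = msubst (sfor k u) t := by
  induction t generalizing k u with
  | var n => simp [subst, msubst, sfor]
  | app a b iha ihb => simp [subst, msubst, iha, ihb]
  | lam a ih =>
      simp only [subst, msubst, lam.injEq]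
      rw [ih]
      apply msubst_ext
      intro n
      cases n with
      | zero => simp [sfor, ups]
      | succ n =>
          simp only [sfor, ups]
          by_cases h : n = k
          · subst h; simp [lift0_eq_rename]
          · have h1 : ¬ (n+1 = k+1) := by omega
            by_cases h2 : k < n
            · have h3 : k+1 < n+1 := by omega
              rw [if_neg h1, if_pos h3, if_neg h, if_pos h2]
              simp only [rename]
              congr 1
              omega
            · have h3 : ¬ (k+1 < n+1) := by omega
              rw [if_neg h1, if_neg h3, if_neg h, if_neg h2]
              rfl

theorem subst0_eq (t u : Lam) : subst t 0 u = msubst (scons u var) t := by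
  rw [subst_eq_msubst]
  apply msubst_ext
  intro n; cases n <;> simp [sfor, scons]

/-- key commutation: substituting into a β-contractum -/
theorem msubst_subst0 (σ : ℕ → Lam) (a b : Lam) :
    msubst σ (subst a 0 b) = subst (msubst (ups σ) a) 0 (msubst σ b) := by
  rw [subst0_eq, subst0_eq, msubst_msubst, msubst_msubst]
  apply msubst_ext
  intro n
  cases n with
  | zero => rfl
  | succ n =>
      simp only [scons, ups, msubst_rename]
      have h : msubst (fun m => scons (msubst σ b) var (Nat.succ m)) (σ n) = msubst var (σ n) :=
        msubst_ext _ (by intro m; rfl)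
      simp only [h, msubst_var]
      rfl

theorem rename_subst0 (ρ : ℕ → ℕ) (a b : Lam) :
    rename ρ (subst a 0 b) = subst (rename (upr ρ) a) 0 (rename ρ b) := by
  rw [subst0_eq, subst0_eq, rename_msubst, msubst_rename]
  apply msubst_ext
  intro n
  cases n with
  | zero => rfl
  | succ n => simp [scons, upr, rename]

theorem msubst_of_vars (ρ : ℕ → ℕ) (a : Lam) :
    msubst (fun n => var (ρ n)) a = rename ρ a := by
  induction a generalizing ρ with
  | var n => rfl
  | app s t ihs iht => simp [msubst, rename, ihs, iht]
  | lam s ih =>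
      simp only [msubst, rename, lam.injEq]
      rw [msubst_ext s (show ∀ n, ups (fun n => var (ρ n)) n = (fun n => var (upr ρ n)) n from ?_)]
      · exact ih (upr ρ)
      intro n; cases n <;> rfl

/-- `subst a 0 (var x)` is a renaming. -/
def rfor (x : ℕ) : ℕ → ℕ := fun n => match n with | 0 => x | n+1 => n

theorem subst0_var_eq_rename (a : Lam) (x : ℕ) :
    subst a 0 (var x) = rename (rfor x) a := by
  rw [subst0_eq, msubst_ext a (show ∀ n, scons (var x) var n = (fun n => var (rfor x n)) n
    from by intro n; cases n <;> rfl)]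
  exact msubst_of_vars _ a

end Lam
namespace Lam

/-! ### Free variable lemmas -/

theorem mem_fv_lam {x : ℕ} {s : Lam} : x ∈ fv (lam s) ↔ x + 1 ∈ fv s := by
  simp only [fv, Finset.mem_image, Finset.mem_erase]
  constructor
  · rintro ⟨z, ⟨hz0, hz⟩, rfl⟩
    have : z - 1 + 1 = z := by omega
    rwa [this]
  · intro h; exact ⟨x+1, ⟨by omega, h⟩, by omega⟩

theorem mem_fv_rename {x : ℕ} {ρ : ℕ → ℕ} {t : Lam} :
    x ∈ fv (rename ρ t) ↔ ∃ y ∈ fv t, ρ y = x := by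
  induction t generalizing x ρ with
  | var n => simp [rename, fv]; tauto
  | app a b iha ihb =>
      simp only [rename, fv, Finset.mem_union, iha, ihb]
      constructor
      · rintro (⟨y, hy, rfl⟩ | ⟨y, hy, rfl⟩) <;> exact ⟨y, by tauto, rfl⟩
      · rintro ⟨y, hy | hy, rfl⟩
        · exact Or.inl ⟨y, hy, rfl⟩
        · exact Or.inr ⟨y, hy, rfl⟩
  | lam a ih =>
      simp only [rename, mem_fv_lam, ih]
      constructor
      · rintro ⟨y, hy, hyx⟩
        match y, hyx with
        | y+1, hyx => exact ⟨y, by simpa [mem_fv_lam] using hy, by simpa [upr] using hyx⟩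
        | 0, hyx => simp [upr] at hyx
      · rintro ⟨y, hy, rfl⟩
        exact ⟨y+1, by simpa [mem_fv_lam] using hy, rfl⟩

theorem mem_fv_msubst {x : ℕ} {σ : ℕ → Lam} {t : Lam} :
    x ∈ fv (msubst σ t) ↔ ∃ y ∈ fv t, x ∈ fv (σ y) := by
  induction t generalizing x σ with
  | var n => simp [msubst, fv]
  | app a b iha ihb =>
      simp only [msubst, fv, Finset.mem_union, iha, ihb]
      constructor
      · rintro (⟨y, hy, h⟩ | ⟨y, hy, h⟩) <;> exact ⟨y, by tauto, h⟩
      · rintro ⟨y, hy | hy, h⟩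
        · exact Or.inl ⟨y, hy, h⟩
        · exact Or.inr ⟨y, hy, h⟩
  | lam a ih =>
      simp only [msubst, mem_fv_lam, ih]
      constructor
      · rintro ⟨y, hy, hx⟩
        match y, hx with
        | 0, hx => simp [ups, fv] at hx
        | y+1, hx =>
            simp only [ups] at hx
            rw [mem_fv_rename] at hx
            obtain ⟨z, hz, hzx⟩ := hx
            have : z = x := by omega
            subst this
            exact ⟨y, by simpa [mem_fv_lam] using hy, hz⟩
      · rintro ⟨y, hy, hx⟩
        refine ⟨y+1, by simpa [mem_fv_lam] using hy, ?_⟩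
        simp only [ups]
        rw [mem_fv_rename]
        exact ⟨x, hx, rfl⟩

theorem msubst_congr_fv {σ σ' : ℕ → Lam} {t : Lam} (h : ∀ x ∈ fv t, σ x = σ' x) :
    msubst σ t = msubst σ' t := by
  induction t generalizing σ σ' with
  | var n => exact h n (by simp [fv])
  | app a b iha ihb =>
      simp only [msubst, app.injEq]
      exact ⟨iha (fun x hx => h x (by simp [fv, hx])),
             ihb (fun x hx => h x (by simp [fv, hx]))⟩
  | lam a ih =>
      simp only [msubst, lam.injEq]
      apply ih
      intro x hx
      match x with
      | 0 => rfl
      | y+1 => simp only [ups]; rw [h y (mem_fv_lam.2 hx)]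

theorem fv_beta {t u : Lam} (h : Beta t u) : fv u ⊆ fv t := by
  induction h with
  | beta a b =>
      intro x hx
      rw [subst0_eq] at hx
      rw [mem_fv_msubst] at hx
      obtain ⟨y, hy, hx⟩ := hx
      match y with
      | 0 => simp [fv, scons] at hx ⊢; tauto
      | y+1 =>
          simp only [scons, fv, Finset.mem_singleton] at hx
          subst hx
          simp only [fv, Finset.mem_union]
          exact Or.inl (mem_fv_lam.2 hy)
  | appL u h ih => intro x hx; simp only [fv, Finset.mem_union] at hx ⊢; tauto
  | appR t h ih => intro x hx; simp only [fv, Finset.mem_union] at hx ⊢; tauto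
  | lam h ih =>
      intro x hx
      rw [mem_fv_lam] at hx ⊢
      exact ih hx

theorem fv_betaStar {t u : Lam} (h : BetaStar t u) : fv u ⊆ fv t := by
  induction h with
  | refl => exact fun x hx => hx
  | tail _ hstep ih => exact fun x hx => ih (fv_beta hstep hx)

/-! ### Congruence and stability lemmas for reduction -/

theorem BetaStar.appL' {t t' : Lam} (u : Lam) (h : BetaStar t t') :
    BetaStar (app t u) (app t' u) := by
  induction h with
  | refl => exact Relation.ReflTransGen.refl
  | tail _ hstep ih => exact ih.tail (Beta.appL u hstep)

theorem BetaStar.appR' (t : Lam) {u u' : Lam} (h : BetaStar u u') :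
    BetaStar (app t u) (app t u') := by
  induction h with
  | refl => exact Relation.ReflTransGen.refl
  | tail _ hstep ih => exact ih.tail (Beta.appR t hstep)

theorem BetaStar.app' {t t' u u' : Lam} (h : BetaStar t t') (h' : BetaStar u u') :
    BetaStar (app t u) (app t' u') :=
  (BetaStar.appL' u h).trans (BetaStar.appR' t' h')

theorem BetaStar.lam' {t t' : Lam} (h : BetaStar t t') : BetaStar (lam t) (lam t') := by
  induction h with
  | refl => exact Relation.ReflTransGen.refl
  | tail _ hstep ih => exact ih.tail (Beta.lam hstep)

theorem Beta.rename {t t' : Lam} (ρ : ℕ → ℕ) (h : Beta t t') :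
    Beta (rename ρ t) (rename ρ t') := by
  induction h generalizing ρ with
  | beta a b =>
      show Beta (Lam.app (Lam.lam (Lam.rename (upr ρ) a)) (Lam.rename ρ b)) _
      rw [rename_subst0]
      exact Beta.beta _ _
  | appL u h ih => exact Beta.appL _ (ih ρ)
  | appR t h ih => exact Beta.appR _ (ih ρ)
  | lam h ih => exact Beta.lam (ih (upr ρ))

theorem BetaStar.rename {t t' : Lam} (ρ : ℕ → ℕ) (h : BetaStar t t') :
    BetaStar (rename ρ t) (rename ρ t') := by
  induction h with
  | refl => exact Relation.ReflTransGen.refl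
  | tail _ hstep ih => exact ih.tail (hstep.rename ρ)

theorem Beta.msubst {t t' : Lam} (σ : ℕ → Lam) (h : Beta t t') :
    Beta (msubst σ t) (msubst σ t') := by
  induction h generalizing σ with
  | beta a b =>
      show Beta (Lam.app (Lam.lam (Lam.msubst (ups σ) a)) (Lam.msubst σ b)) _
      rw [msubst_subst0]
      exact Beta.beta _ _
  | appL u h ih => exact Beta.appL _ (ih σ)
  | appR t h ih => exact Beta.appR _ (ih σ)
  | lam h ih => exact Beta.lam (ih (ups σ))

theorem BetaStar.msubst {t t' : Lam} (σ : ℕ → Lam) (h : BetaStar t t') :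
    BetaStar (msubst σ t) (msubst σ t') := by
  induction h with
  | refl => exact Relation.ReflTransGen.refl
  | tail _ hstep ih => exact ih.tail (hstep.msubst σ)

theorem BetaStar.msubst_pointwise {σ σ' : ℕ → Lam} (t : Lam)
    (h : ∀ n, BetaStar (σ n) (σ' n)) : BetaStar (Lam.msubst σ t) (Lam.msubst σ' t) := by
  induction t generalizing σ σ' with
  | var n => exact h n
  | app a b iha ihb => exact BetaStar.app' (iha h) (ihb h)
  | lam a ih =>
      apply BetaStar.lam'
      apply ih
      intro n
      cases n with
      | zero => exact Relation.ReflTransGen.refl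
      | succ n => exact (h n).rename Nat.succ

theorem BetaStar.subst' {a a' b b' : Lam} (ha : BetaStar a a') (hb : BetaStar b b') :
    BetaStar (subst a 0 b) (subst a' 0 b') := by
  rw [subst0_eq, subst0_eq]
  refine ((ha.msubst (scons b var)).trans (BetaStar.msubst_pointwise a' ?_))
  intro n
  cases n with
  | zero => exact hb
  | succ n => exact Relation.ReflTransGen.refl


theorem Whr.beta {t u : Lam} (h : Whr t u) : Beta t u := by
  induction h with
  | head a b => exact Beta.beta a b
  | appL u h ih => exact Beta.appL u ih

theorem WhrStar.betaStar {t u : Lam} (h : WhrStar t u) : BetaStar t u := by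
  induction h with
  | refl => exact Relation.ReflTransGen.refl
  | tail _ hstep ih => exact ih.tail hstep.beta

theorem Whr.msubst {t t' : Lam} (σ : ℕ → Lam) (h : Whr t t') :
    Whr (msubst σ t) (msubst σ t') := by
  induction h generalizing σ with
  | head a b =>
      show Whr (Lam.app (Lam.lam (Lam.msubst (ups σ) a)) (Lam.msubst σ b)) _
      rw [msubst_subst0]
      exact Whr.head _ _
  | appL u h ih => exact Whr.appL _ (ih σ)

theorem WhrStar.msubst {t t' : Lam} (σ : ℕ → Lam) (h : WhrStar t t') :
    WhrStar (msubst σ t) (msubst σ t') := by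
  induction h with
  | refl => exact Relation.ReflTransGen.refl
  | tail _ hstep ih => exact ih.tail (hstep.msubst σ)

theorem WhrStar.appL' {t t' : Lam} (u : Lam) (h : WhrStar t t') :
    WhrStar (app t u) (app t' u) := by
  induction h with
  | refl => exact Relation.ReflTransGen.refl
  | tail _ hstep ih => exact ih.tail (Whr.appL u hstep)

/-! ### Inversion of multi-step reduction -/

theorem betaStar_var_inv {x : ℕ} {c : Lam} (h : BetaStar (var x) c) : c = var x := by
  induction h with
  | refl => rfl
  | tail _ hstep ih => subst ih; cases hstep

theorem betaStar_lam_inv {a c : Lam} (h : BetaStar (lam a) c) :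
    ∃ a', c = lam a' ∧ BetaStar a a' := by
  induction h with
  | refl => exact ⟨a, rfl, Relation.ReflTransGen.refl⟩
  | tail _ hstep ih =>
      obtain ⟨a', rfl, ha⟩ := ih
      cases hstep with
      | lam h => exact ⟨_, rfl, ha.tail h⟩

theorem betaStar_app_inv {a b c : Lam} (h : BetaStar (app a b) c) :
    (∃ a' b', c = app a' b' ∧ BetaStar a a' ∧ BetaStar b b') ∨
    (∃ a₁ b₁, BetaStar a (lam a₁) ∧ BetaStar b b₁ ∧ BetaStar (subst a₁ 0 b₁) c) := by
  induction h with
  | refl => exact Or.inl ⟨a, b, rfl, Relation.ReflTransGen.refl, Relation.ReflTransGen.refl⟩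
  | tail hpre hstep ih =>
      rcases ih with ⟨a', b', rfl, ha, hb⟩ | ⟨a₁, b₁, ha, hb, hc⟩
      · cases hstep with
        | beta s u =>
            exact Or.inr ⟨s, b', ha, hb, Relation.ReflTransGen.refl⟩
        | appL u h => exact Or.inl ⟨_, _, rfl, ha.tail h, hb⟩
        | appR t h => exact Or.inl ⟨_, _, rfl, ha, hb.tail h⟩
      · exact Or.inr ⟨a₁, b₁, ha, hb, hc.tail hstep⟩

end Lam
namespace Lam

/-! ### Parallel reduction and weak-head factorization -/

inductive Par : Lam → Lam → Prop
  | var (n : ℕ) : Par (var n) (var n)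
  | lam {t t' : Lam} : Par t t' → Par (lam t) (lam t')
  | app {a a' b b' : Lam} : Par a a' → Par b b' → Par (app a b) (app a' b')
  | beta {a a' b b' : Lam} : Par a a' → Par b b' → Par (app (lam a) b) (subst a' 0 b')

/-- internal (non-head) parallel reduction -/
inductive IPar : Lam → Lam → Prop
  | var (n : ℕ) : IPar (var n) (var n)
  | lam {t t' : Lam} : Par t t' → IPar (lam t) (lam t')
  | app {a a' b b' : Lam} : IPar a a' → Par b b' → IPar (app a b) (app a' b')

theorem Par.refl (t : Lam) : Par t t := by
  induction t with
  | var n => exact Par.var n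
  | app a b iha ihb => exact Par.app iha ihb
  | lam a ih => exact Par.lam ih

theorem Beta.par {t u : Lam} (h : Beta t u) : Par t u := by
  induction h with
  | beta a b => exact Par.beta (Par.refl a) (Par.refl b)
  | appL u h ih => exact Par.app ih (Par.refl u)
  | appR t h ih => exact Par.app (Par.refl t) ih
  | lam h ih => exact Par.lam ih

theorem Par.betaStar {t u : Lam} (h : Par t u) : BetaStar t u := by
  induction h with
  | var n => exact Relation.ReflTransGen.refl
  | lam _ ih => exact BetaStar.lam' ih
  | app _ _ iha ihb => exact BetaStar.app' iha ihb
  | beta _ _ iha ihb =>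
      exact (BetaStar.app' (BetaStar.lam' iha) ihb).tail (Beta.beta _ _)

theorem IPar.par {t u : Lam} (h : IPar t u) : Par t u := by
  induction h with
  | var n => exact Par.var n
  | lam h => exact Par.lam h
  | app _ hb ih => exact Par.app ih hb

theorem Par.rename {t t' : Lam} (ρ : ℕ → ℕ) (h : Par t t') :
    Par (rename ρ t) (rename ρ t') := by
  induction h generalizing ρ with
  | var n => exact Par.var _
  | lam _ ih => exact Par.lam (ih (upr ρ))
  | app _ _ iha ihb => exact Par.app (iha ρ) (ihb ρ)
  | beta _ _ iha ihb =>
      show Par (Lam.app (Lam.lam (Lam.rename (upr ρ) _)) (Lam.rename ρ _)) _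
      rw [rename_subst0]
      exact Par.beta (iha (upr ρ)) (ihb ρ)

theorem Par.msubst {t t' : Lam} (h : Par t t') :
    ∀ {σ σ' : ℕ → Lam}, (∀ n, Par (σ n) (σ' n)) →
    Par (Lam.msubst σ t) (Lam.msubst σ' t') := by
  induction h with
  | var n => intro σ σ' hp; exact hp n
  | lam _ ih =>
      intro σ σ' hp
      refine Par.lam (ih ?_)
      intro n; cases n with
      | zero => exact Par.var 0
      | succ n => exact (hp n).rename Nat.succ
  | app _ _ iha ihb => intro σ σ' hp; exact Par.app (iha hp) (ihb hp)
  | beta _ _ iha ihb =>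
      intro σ σ' hp
      show Par (Lam.app (Lam.lam (Lam.msubst (ups σ) _)) (Lam.msubst σ _)) _
      rw [msubst_subst0]
      refine Par.beta (iha ?_) (ihb hp)
      intro n; cases n with
      | zero => exact Par.var 0
      | succ n => exact (hp n).rename Nat.succ

theorem Par.subst' {a a' b b' : Lam} (ha : Par a a') (hb : Par b b') :
    Par (subst a 0 b) (subst a' 0 b') := by
  rw [subst0_eq, subst0_eq]
  refine ha.msubst ?_
  intro n; cases n with
  | zero => exact hb
  | succ n => exact Par.var n

theorem msubst_scons (σ : ℕ → Lam) (a b : Lam) :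
    subst (msubst (ups σ) a) 0 (msubst σ b) = msubst (scons (msubst σ b) σ) a := by
  rw [← msubst_subst0, subst0_eq, msubst_msubst]
  apply msubst_ext
  intro n; cases n <;> rfl

/-- split lemma, substitution version -/
theorem split_aux {e e' : Lam} (h : Par e e') :
    ∀ σ σ' : ℕ → Lam, (∀ n, Par (σ n) (σ' n)) →
    (∀ n, ∃ w, WhrStar (σ n) w ∧ IPar w (σ' n)) →
    ∃ u, WhrStar (msubst σ e) u ∧ IPar u (msubst σ' e') := by
  induction h with
  | var n => intro σ σ' hp hs; exact hs n
  | lam ht =>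
      intro σ σ' hp hs
      refine ⟨_, Relation.ReflTransGen.refl, IPar.lam (ht.msubst ?_)⟩
      intro n; cases n with
      | zero => exact Par.var 0
      | succ n => exact (hp n).rename Nat.succ
  | app _ hb iha _ =>
      intro σ σ' hp hs
      obtain ⟨u₁, hw, hi⟩ := iha σ σ' hp hs
      exact ⟨Lam.app u₁ _, hw.appL' _, IPar.app hi (hb.msubst hp)⟩
  | beta ha hb iha ihb =>
      intro σ σ' hp hs
      obtain ⟨u, hw, hi⟩ := iha (scons (msubst σ _) σ) (scons (msubst σ' _) σ')
        (by intro n; cases n with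
            | zero => exact hb.msubst hp
            | succ n => exact hp n)
        (by intro n; cases n with
            | zero => exact ihb σ σ' hp hs
            | succ n => exact hs n)
      refine ⟨u, ?_, ?_⟩
      · show WhrStar (Lam.app (Lam.lam (msubst (ups σ) _)) (msubst σ _)) u
        refine Relation.ReflTransGen.head (Whr.head _ _) ?_
        rwa [msubst_scons]
      · rw [show msubst σ' (subst _ 0 _) = _ from msubst_subst0 σ' _ _, msubst_scons]
        exact hi

theorem Par.split {t v : Lam} (h : Par t v) : ∃ u, WhrStar t u ∧ IPar u v := by
  have := split_aux h Lam.var Lam.var (fun n => Par.var n)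
    (fun n => ⟨Lam.var n, Relation.ReflTransGen.refl, IPar.var n⟩)
  rwa [msubst_var, msubst_var] at this

theorem IPar.commute {a b : Lam} (h : IPar a b) :
    ∀ {c : Lam}, Whr b c → ∃ d, Whr a d ∧ Par d c := by
  induction h with
  | var n => intro c hc; cases hc
  | lam _ => intro c hc; cases hc
  | app ha hb iha =>
      intro c hc
      cases hc with
      | head e' b₀' =>
          cases ha with
          | lam he => exact ⟨_, Whr.head _ _, Par.subst' he hb⟩
      | appL u h =>
          obtain ⟨d₀, hw, hp⟩ := iha h
          exact ⟨_, Whr.appL _ hw, Par.app hp hb⟩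

/-- length-indexed weak head reduction -/
inductive WhrN : ℕ → Lam → Lam → Prop
  | zero (t : Lam) : WhrN 0 t t
  | succ {t u v : Lam} {n : ℕ} : Whr t u → WhrN n u v → WhrN (n+1) t v

theorem WhrN.whrStar {n : ℕ} {t u : Lam} (h : WhrN n t u) : WhrStar t u := by
  induction h with
  | zero t => exact Relation.ReflTransGen.refl
  | succ h _ ih => exact Relation.ReflTransGen.head h ih

theorem WhrN.snoc {n : ℕ} {t u v : Lam} (h : WhrN n t u) (h2 : Whr u v) :
    WhrN (n+1) t v := by
  induction h with
  | zero t => exact WhrN.succ h2 (WhrN.zero _)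
  | succ h1 _ ih => exact WhrN.succ h1 (ih h2)

theorem WhrStar.whrN {t u : Lam} (h : WhrStar t u) : ∃ n, WhrN n t u := by
  induction h with
  | refl => exact ⟨0, WhrN.zero t⟩
  | tail _ hstep ih =>
      obtain ⟨n, hn⟩ := ih
      exact ⟨n+1, hn.snoc hstep⟩

/-- the factorization engine -/
theorem factor_engine : ∀ (m : ℕ) {w u v : Lam}, Par w u → WhrN m u v →
    ∃ w₀, WhrStar w w₀ ∧ IPar w₀ v := by
  intro m
  induction m with
  | zero =>
      intro w u v hp hw
      cases hw
      exact hp.split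
  | succ m ih =>
      intro w u v hp hw
      cases hw with
      | succ h1 rest =>
          obtain ⟨w', hw', hi'⟩ := hp.split
          obtain ⟨d, hd, pd⟩ := hi'.commute h1
          obtain ⟨w₀, hw₀, hi₀⟩ := ih pd rest
          exact ⟨w₀, (hw'.tail hd).trans hw₀, hi₀⟩

theorem ipar_var_inv {w : Lam} {x : ℕ} (h : IPar w (var x)) : w = var x := by
  cases h; rfl

theorem ipar_app_inv {w p a : Lam} (h : IPar w (app p a)) :
    ∃ p' a', w = app p' a' ∧ IPar p' p ∧ Par a' a := by
  cases h with
  | app hp ha => exact ⟨_, _, rfl, hp, ha⟩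

def ParStar : Lam → Lam → Prop := Relation.ReflTransGen Par

theorem BetaStar.parStar {t u : Lam} (h : BetaStar t u) : ParStar t u := by
  induction h with
  | refl => exact Relation.ReflTransGen.refl
  | tail _ hstep ih => exact ih.tail hstep.par

theorem ParStar.betaStar {t u : Lam} (h : ParStar t u) : BetaStar t u := by
  induction h with
  | refl => exact Relation.ReflTransGen.refl
  | tail _ hstep ih => exact ih.trans hstep.betaStar

/-- factorization towards a variable -/
theorem extract_var {t : Lam} {x : ℕ} (h : BetaStar t (var x)) : WhrStar t (var x) := by
  have h' : ParStar t (var x) := h.parStar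
  clear h
  induction h' using Relation.ReflTransGen.head_induction_on with
  | refl => exact Relation.ReflTransGen.refl
  | head hstep _ ih =>
      obtain ⟨m, hm⟩ := ih.whrN
      obtain ⟨w₀, hw₀, hi₀⟩ := factor_engine m hstep hm
      rw [ipar_var_inv hi₀] at hw₀
      exact hw₀

/-- factorization towards an application -/
theorem extract_app {t p a : Lam} (h : BetaStar t (app p a)) :
    ∃ p' a', WhrStar t (app p' a') ∧ BetaStar p' p ∧ BetaStar a' a := by
  have h' : ParStar t (app p a) := h.parStar
  clear h
  have : ∃ p' a', WhrStar t (app p' a') ∧ ParStar p' p ∧ ParStar a' a := by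
    clear * - h'
    induction h' using Relation.ReflTransGen.head_induction_on with
    | refl =>
        exact ⟨p, a, Relation.ReflTransGen.refl, Relation.ReflTransGen.refl,
          Relation.ReflTransGen.refl⟩
    | head hstep _ ih =>
        obtain ⟨p₁, a₁, hwh, hc1, hc2⟩ := ih
        obtain ⟨m, hm⟩ := hwh.whrN
        obtain ⟨w₀, hw₀, hi₀⟩ := factor_engine m hstep hm
        obtain ⟨p', a', rfl, hip, hia⟩ := ipar_app_inv hi₀
        exact ⟨p', a', hw₀, Relation.ReflTransGen.head hip.par hc1,
          Relation.ReflTransGen.head hia hc2⟩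
  obtain ⟨p', a', hwh, h1, h2⟩ := this
  exact ⟨p', a', hwh, h1.betaStar, h2.betaStar⟩

end Lam
namespace Lam

/-! ### Reflection of reduction along injective renamings -/

theorem beta_app_inv {x y c : Lam} (h : Beta (app x y) c) :
    (∃ x₁, x = lam x₁ ∧ c = subst x₁ 0 y) ∨
    (∃ x', Beta x x' ∧ c = app x' y) ∨ (∃ y', Beta y y' ∧ c = app x y') := by
  cases h with
  | beta s u => exact Or.inl ⟨s, rfl, rfl⟩
  | appL u h => exact Or.inr (Or.inl ⟨_, h, rfl⟩)
  | appR t h => exact Or.inr (Or.inr ⟨_, h, rfl⟩)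

theorem beta_rename_reflect {a : Lam} {ρ : ℕ → ℕ} {c : Lam}
    (h : Beta (rename ρ a) c)
    (hinj : ∀ y ∈ fv a, ∀ z ∈ fv a, ρ y = ρ z → y = z) :
    ∃ c₀, c = rename ρ c₀ ∧ Beta a c₀ := by
  induction a generalizing ρ c with
  | var n => exact absurd h (by intro h; cases h)
  | app a₁ a₂ ih₁ ih₂ =>
      rcases beta_app_inv (show Beta (app (rename ρ a₁) (rename ρ a₂)) c from h) with
        ⟨x₁, hx, rfl⟩ | ⟨x', hb, rfl⟩ | ⟨y', hb, rfl⟩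
      · cases a₁ with
        | var n => simp [rename] at hx
        | app _ _ => simp [rename] at hx
        | lam a₁' =>
            have hx' : rename (upr ρ) a₁' = x₁ := by
              simpa [rename] using hx
            refine ⟨subst a₁' 0 a₂, ?_, Beta.beta _ _⟩
            rw [rename_subst0, hx']
      · obtain ⟨c₁, rfl, hb₁⟩ := ih₁ hb
          (fun y hy z hz => hinj y (by simp [fv, hy]) z (by simp [fv, hz]))
        exact ⟨app c₁ a₂, rfl, Beta.appL _ hb₁⟩
      · obtain ⟨c₂, rfl, hb₂⟩ := ih₂ hb
          (fun y hy z hz => hinj y (by simp [fv, hy]) z (by simp [fv, hz]))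
        exact ⟨app a₁ c₂, rfl, Beta.appR _ hb₂⟩
  | lam a₁ ih =>
      have h' : ∃ e, c = lam e ∧ Beta (rename (upr ρ) a₁) e := by
        cases h with
        | lam h => exact ⟨_, rfl, h⟩
      obtain ⟨e, rfl, h''⟩ := h'
      have hinj' : ∀ y ∈ fv a₁, ∀ z ∈ fv a₁, upr ρ y = upr ρ z → y = z := by
        intro y hy z hz hyz
        match y, z with
        | 0, 0 => rfl
        | 0, z+1 => simp [upr] at hyz
        | y+1, 0 => simp [upr] at hyz
        | y+1, z+1 =>
            simp only [upr] at hyz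
            have := hinj y (mem_fv_lam.2 hy) z (mem_fv_lam.2 hz) (by omega)
            omega
      obtain ⟨c₁, rfl, hb⟩ := ih h'' hinj'
      exact ⟨lam c₁, rfl, Beta.lam hb⟩

theorem betaStar_rename_reflect {a : Lam} {ρ : ℕ → ℕ} {c : Lam}
    (h : BetaStar (rename ρ a) c)
    (hinj : ∀ y ∈ fv a, ∀ z ∈ fv a, ρ y = ρ z → y = z) :
    ∃ c₀, c = rename ρ c₀ ∧ BetaStar a c₀ := by
  induction h with
  | refl => exact ⟨a, rfl, Relation.ReflTransGen.refl⟩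
  | tail hpre hstep ih =>
      obtain ⟨c₀, rfl, hb⟩ := ih
      obtain ⟨c₁, rfl, hb₁⟩ := beta_rename_reflect hstep
        (fun y hy z hz => hinj y (fv_betaStar hb hy) z (fv_betaStar hb hz))
      exact ⟨c₁, rfl, hb.tail hb₁⟩

end Lam
namespace Ty

/-! ### Type-level lemmas -/

def sizeT : Ty → ℕ
  | var _ => 1
  | arr A B => sizeT A + sizeT B + 1
  | all A => sizeT A + 1

theorem lift_var (d Y : ℕ) : Ty.lift d (Ty.var Y) = Ty.var (if Y < d then Y else Y + 1) := by
  simp only [Ty.lift]; split <;> simp_all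

theorem lift0_var (Y : ℕ) : Ty.lift 0 (Ty.var Y) = Ty.var (Y + 1) := by
  simp [lift_var]

theorem sizeT_subst_var (A : Ty) : ∀ k Y, sizeT (A.subst k (Ty.var Y)) = sizeT A := by
  induction A with
  | var n => intro k Y; simp only [Ty.subst]; split <;> (try split) <;> simp [sizeT]
  | arr B C ihB ihC => intro k Y; simp [Ty.subst, sizeT, ihB, ihC]
  | all A ih => intro k Y; simp [Ty.subst, sizeT, lift0_var, ih]

theorem mem_fv_all {Y : ℕ} {A : Ty} : Y ∈ (Ty.all A).fv ↔ Y + 1 ∈ A.fv := by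
  simp only [Ty.fv, Finset.mem_image, Finset.mem_erase]
  constructor
  · rintro ⟨z, ⟨hz0, hz⟩, rfl⟩
    have : z - 1 + 1 = z := by omega
    rwa [this]
  · intro h; exact ⟨Y+1, ⟨by omega, h⟩, by omega⟩

/-- small free variables survive substitution -/
theorem mem_fv_subst_var_lt {A : Ty} : ∀ {j k Y : ℕ}, j ∈ A.fv → j < k →
    j ∈ (A.subst k (Ty.var Y)).fv := by
  induction A with
  | var n =>
      intro j k Y hj hjk
      simp only [Ty.fv, Finset.mem_singleton] at hj
      subst hj
      simp only [Ty.subst]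
      rw [if_neg (by omega), if_neg (by omega)]
      simp [Ty.fv]
  | arr B C ihB ihC =>
      intro j k Y hj hjk
      simp only [Ty.fv, Ty.subst, Finset.mem_union] at hj ⊢
      rcases hj with hj | hj
      · exact Or.inl (ihB hj hjk)
      · exact Or.inr (ihC hj hjk)
  | all A ih =>
      intro j k Y hj hjk
      rw [mem_fv_all] at hj
      simp only [Ty.subst, lift0_var]
      rw [mem_fv_all]
      exact ih hj (by omega)

/-- substituted variable occurs if the substitution site occurs -/
theorem mem_fv_subst_var_hit {A : Ty} : ∀ {k Y : ℕ}, k ∈ A.fv →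
    Y ∈ (A.subst k (Ty.var Y)).fv := by
  induction A with
  | var n =>
      intro k Y hk
      simp only [Ty.fv, Finset.mem_singleton] at hk
      subst hk
      simp [Ty.subst, Ty.fv]
  | arr B C ihB ihC =>
      intro k Y hk
      simp only [Ty.fv, Ty.subst, Finset.mem_union] at hk ⊢
      rcases hk with hk | hk
      · exact Or.inl (ihB hk)
      · exact Or.inr (ihC hk)
  | all A ih =>
      intro k Y hk
      rw [mem_fv_all] at hk
      simp only [Ty.subst, lift0_var]
      rw [mem_fv_all]
      exact ih hk

theorem subst_var_is_var (n k Y : ℕ) : ∃ m, (Ty.var n).subst k (Ty.var Y) = Ty.var m := by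
  simp only [Ty.subst]
  split
  · exact ⟨Y, rfl⟩
  · split <;> exact ⟨_, rfl⟩

/-- positivity/negativity is preserved by variable-for-variable substitution -/
theorem posneg_subst_var (A : Ty) : ∀ k Y,
    (PosTy A → PosTy (A.subst k (Ty.var Y))) ∧ (NegTy A → NegTy (A.subst k (Ty.var Y))) := by
  induction A with
  | var n =>
      intro k Y
      obtain ⟨m, hm⟩ := subst_var_is_var n k Y
      rw [hm]
      exact ⟨fun _ => PosTy.var m, fun _ => NegTy.var m⟩
  | arr B C ihB ihC =>
      intro k Y
      constructor
      · intro h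
        cases h with
        | arr hB hC => exact PosTy.arr ((ihB k Y).2 hB) ((ihC k Y).1 hC)
      · intro h
        cases h with
        | arr hB hC => exact NegTy.arr ((ihB k Y).1 hB) ((ihC k Y).2 hC)
  | all A ih =>
      intro k Y
      constructor
      · intro h
        cases h with
        | all hA h0 =>
            simp only [Ty.subst, lift0_var]
            exact PosTy.all ((ih (k+1) (Y+1)).1 hA) (mem_fv_subst_var_lt h0 (by omega))
      · intro h; cases h

end Ty

/-! ### Interpretation lemmas -/

theorem Interp.cons_zero (G : Set Lam) (I : Interp) : Interp.cons G I 0 = G := rfl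
theorem Interp.cons_succ (G : Set Lam) (I : Interp) (n : ℕ) : Interp.cons G I (n+1) = I n := rfl

theorem Interp.cons_apply (G : Set Lam) (I : Interp) (n : ℕ) :
    Interp.cons G I n = if n = 0 then G else I (n-1) := by
  match n with
  | 0 => rfl
  | n+1 => simp [Interp.cons_succ]

theorem interpC_congr (C : Set Lam → Prop) (A : Ty) :
    ∀ {I I' : Interp}, (∀ n ∈ A.fv, I n = I' n) → interpC C A I = interpC C A I' := by
  induction A with
  | var n => intro I I' h; exact h n (by simp [Ty.fv])
  | arr B D ihB ihD =>
      intro I I' h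
      simp only [interpC]
      rw [ihB (fun n hn => h n (by simp [Ty.fv, hn])),
          ihD (fun n hn => h n (by simp [Ty.fv, hn]))]
  | all A ih =>
      intro I I' h
      simp only [interpC]
      apply Set.iInter_congr
      intro G
      apply Set.iInter_congr
      intro _
      apply ih
      intro n hn
      match n with
      | 0 => rfl
      | n+1 => exact h n (Ty.mem_fv_all.2 hn)

theorem interpC_subst_var (C : Set Lam → Prop) (A : Ty) :
    ∀ (k Y : ℕ) (I : Interp), interpC C (A.subst k (Ty.var Y)) I =
      interpC C A (fun n => if n < k then I n else if n = k then I Y else I (n-1)) := by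
  induction A with
  | var n =>
      intro k Y I
      simp only [Ty.subst]
      split_ifs with h1 h2 <;> simp only [interpC] <;> split_ifs <;>
        first | rfl | omega | (congr 1; omega)
  | arr B D ihB ihD =>
      intro k Y I
      simp only [Ty.subst, interpC]
      rw [ihB, ihD]
  | all A ih =>
      intro k Y I
      simp only [Ty.subst, Ty.lift0_var, interpC]
      apply Set.iInter_congr
      intro G
      apply Set.iInter_congr
      intro _
      rw [ih]
      apply interpC_congr
      intro n _
      simp only [Interp.cons_apply]; erw [Interp.cons_apply]
      split_ifs <;> first | rfl | contradiction | omega | (congr 1; omega)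

theorem interpC_subst_var0 (C : Set Lam → Prop) (A : Ty) (Y : ℕ) (I : Interp) :
    interpC C (A.subst 0 (Ty.var Y)) I = interpC C A (Interp.cons (I Y) I) := by
  rw [interpC_subst_var]
  apply interpC_congr
  intro n _
  simp only [Interp.cons_apply]
  split_ifs <;> first | rfl | contradiction | omega | (congr 1; omega)

theorem betaSaturated_saturated {G : Set Lam} (h : BetaSaturated G) : Saturated G :=
  fun t u hw hu => h t u hw.betaStar hu

theorem saturated_empty : Saturated (∅ : Set Lam) := fun _ _ _ h => h.elim

theorem betaSaturated_empty : BetaSaturated (∅ : Set Lam) := fun _ _ _ h => h.elim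

theorem arrowSet_saturated {G G' : Set Lam} (h : Saturated G') : Saturated (arrowSet G G') := by
  intro t u hw hu s hs
  exact h _ _ (hw.appL' s) (hu s hs)

theorem arrowSet_betaSaturated {G G' : Set Lam} (h : BetaSaturated G') :
    BetaSaturated (arrowSet G G') := by
  intro t u hw hu s hs
  exact h _ _ (Lam.BetaStar.appL' s hw) (hu s hs)

theorem saturated_iInter {ι : Sort*} {f : ι → Set Lam} (h : ∀ i, Saturated (f i)) :
    Saturated (⋂ i, f i) := by
  intro t u hw hu
  simp only [Set.mem_iInter] at hu ⊢
  exact fun i => h i _ _ hw (hu i)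

theorem betaSaturated_iInter {ι : Sort*} {f : ι → Set Lam} (h : ∀ i, BetaSaturated (f i)) :
    BetaSaturated (⋂ i, f i) := by
  intro t u hw hu
  simp only [Set.mem_iInter] at hu ⊢
  exact fun i => h i _ _ hw (hu i)

theorem interpC_saturated (A : Ty) : ∀ {I : Interp}, (∀ n, Saturated (I n)) →
    Saturated (interpC Saturated A I) := by
  induction A with
  | var n => intro I h; exact h n
  | arr B D _ ihD => intro I h; exact arrowSet_saturated (ihD h)
  | all A ih =>
      intro I h
      apply saturated_iInter
      intro G
      apply saturated_iInter
      intro hG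
      apply ih
      intro n
      match n with
      | 0 => exact hG
      | n+1 => exact h n

theorem interpC_betaSaturated (A : Ty) : ∀ {I : Interp}, (∀ n, BetaSaturated (I n)) →
    BetaSaturated (interpC BetaSaturated A I) := by
  induction A with
  | var n => intro I h; exact h n
  | arr B D _ ihD => intro I h; exact arrowSet_betaSaturated (ihD h)
  | all A ih =>
      intro I h
      apply betaSaturated_iInter
      intro G
      apply betaSaturated_iInter
      intro hG
      apply ih
      intro n
      match n with
      | 0 => exact hG
      | n+1 => exact h n
/-! ### Canonical members -/

namespace Lam

theorem rename_congr_fv {ρ ρ' : ℕ → ℕ} {t : Lam} (h : ∀ x ∈ fv t, ρ x = ρ' x) :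
    rename ρ t = rename ρ' t := by
  induction t generalizing ρ ρ' with
  | var n => simp only [rename]; rw [h n (by simp [fv])]
  | app a b iha ihb =>
      simp only [rename, app.injEq]
      exact ⟨iha (fun x hx => h x (by simp [fv, hx])), ihb (fun x hx => h x (by simp [fv, hx]))⟩
  | lam a ih =>
      simp only [rename, lam.injEq]
      apply ih
      intro x hx
      match x with
      | 0 => rfl
      | y+1 => simp only [upr]; rw [h y (mem_fv_lam.2 hx)]

theorem rename_id (t : Lam) : rename (fun n => n) t = t := by
  have := msubst_of_vars (fun n => n) t
  rw [← this]
  exact msubst_var t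

end Lam

/-- extended type contexts for canonical forms -/
def tcons (N : Ty) (γ : ℕ → Ty) : ℕ → Ty := fun n => match n with | 0 => N | n+1 => γ n

/-- non-abstraction terms -/
def Neutral : Lam → Prop := fun v => match v with | Lam.lam _ => False | _ => True

theorem Neutral.rename {ρ : ℕ → ℕ} {v : Lam} (h : Neutral v) : Neutral (Lam.rename ρ v) := by
  cases v <;> simp_all [Neutral, Lam.rename]

/-- canonical realizers over a context of (negative) types -/
inductive Can : (ℕ → Ty) → Ty → Lam → Prop
  | var (γ : ℕ → Ty) (x : ℕ) : Can γ (γ x) (Lam.var x)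
  | app {γ : ℕ → Ty} {Q C : Ty} {p a : Lam} :
      Can γ (Ty.arr Q C) p → Neutral p → Can γ Q a → Can γ C (Lam.app p a)
  | lam {γ : ℕ → Ty} {N C : Ty} {v : Lam} :
      Can (tcons N γ) C v → Can γ (Ty.arr N C) (Lam.lam v)
  | all {γ : ℕ → Ty} {P : Ty} {Y : ℕ} {v : Lam} :
      0 ∈ P.fv → Y ∉ (Ty.all P).fv → (∀ x ∈ v.fv, Y ∉ (γ x).fv) →
      Can γ (P.subst 0 (Ty.var Y)) v → Can γ (Ty.all P) v

def NegCtx (γ : ℕ → Ty) : Prop := ∀ x, NegTy (γ x)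

/-- a neutral canonical term has a head variable whose type bounds the free
type variables of the assigned type -/
theorem can_neutral_head {γ : ℕ → Ty} {C : Ty} {v : Lam} (h : Can γ C v) (hn : Neutral v) :
    ∃ x ∈ v.fv, C.fv ⊆ (γ x).fv := by
  induction h with
  | var γ x => exact ⟨x, by simp [Lam.fv], fun y hy => hy⟩
  | app hp hnp ha ihp iha =>
      obtain ⟨x, hx, hsub⟩ := ihp hnp
      exact ⟨x, by simp [Lam.fv, hx], fun y hy => hsub (by simp [Ty.fv, hy])⟩
  | lam _ _ => exact absurd hn (by simp [Neutral])
  | all h0 hY1 hY2 hcan ih =>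
      obtain ⟨x, hx, hsub⟩ := ih hn
      exact absurd (hsub (Ty.mem_fv_subst_var_hit h0)) (hY2 x hx)

/-- with a negative context, neutral canonical terms have negative types -/
theorem can_neutral_negTy {γ : ℕ → Ty} {C : Ty} {v : Lam} (h : Can γ C v) (hn : Neutral v)
    (hγ : NegCtx γ) : NegTy C := by
  induction h with
  | var γ x => exact hγ x
  | app hp hnp ha ihp iha =>
      have := ihp hnp hγ
      cases this with
      | arr _ h => exact h
  | lam _ _ => exact absurd hn (by simp [Neutral])
  | all h0 hY1 hY2 hcan ih =>
      obtain ⟨x, hx, hsub⟩ := can_neutral_head hcan hn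
      exact absurd (hsub (Ty.mem_fv_subst_var_hit h0)) (hY2 x hx)

theorem can_all_neutral {γ : ℕ → Ty} {P : Ty} {v : Lam} (h : Can γ (Ty.all P) v)
    (hn : Neutral v) (hγ : NegCtx γ) : False := by
  have := can_neutral_negTy h hn hγ
  cases this

theorem can_app_inv {γ : ℕ → Ty} {C : Ty} {p a : Lam} (hγ : NegCtx γ)
    (h : Can γ C (Lam.app p a)) : ∃ Q, Can γ (Ty.arr Q C) p ∧ Neutral p ∧ Can γ Q a := by
  cases h with
  | app hp hn ha => exact ⟨_, hp, hn, ha⟩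
  | all h0 hY1 hY2 hcan => exact absurd (can_all_neutral (Can.all h0 hY1 hY2 hcan)
      (by simp [Neutral]) hγ) not_false

theorem can_var_rigid {γ : ℕ → Ty} {Q : Ty} {x : ℕ} (hγ : NegCtx γ)
    (h : Can γ Q (Lam.var x)) : Q = γ x := by
  cases h with
  | var => rfl
  | all h0 hY1 hY2 hcan => exact absurd (can_all_neutral (Can.all h0 hY1 hY2 hcan)
      (by simp [Neutral]) hγ) not_false

theorem Can.rename {γ : ℕ → Ty} {C : Ty} {v : Lam} (h : Can γ C v) :
    ∀ (γ' : ℕ → Ty) (ρ : ℕ → ℕ), (∀ y ∈ v.fv, γ' (ρ y) = γ y) →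
    Can γ' C (Lam.rename ρ v) := by
  induction h with
  | var γ x =>
      intro γ' ρ hc
      have := hc x (by simp [Lam.fv])
      show Can γ' (γ x) (Lam.var (ρ x))
      rw [← this]
      exact Can.var γ' (ρ x)
  | app hp hn ha ihp iha =>
      intro γ' ρ hc
      exact Can.app (ihp γ' ρ (fun y hy => hc y (by simp [Lam.fv, hy])))
        (hn.rename)
        (iha γ' ρ (fun y hy => hc y (by simp [Lam.fv, hy])))
  | lam hv ih =>
      intro γ' ρ hc
      refine Can.lam (ih (tcons _ γ') (Lam.upr ρ) ?_)
      intro y hy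
      match y with
      | 0 => rfl
      | y+1 =>
          show γ' (ρ y) = _
          exact hc y (Lam.mem_fv_lam.2 hy)
  | all h0 hY1 hY2 hcan ih =>
      intro γ' ρ hc
      refine Can.all h0 hY1 ?_ (ih γ' ρ hc)
      intro x hx
      rw [Lam.mem_fv_rename] at hx
      obtain ⟨y, hy, rfl⟩ := hx
      rw [hc y hy]
      exact hY2 y hy
/-! ### The syntactic test interpretation and canonicity -/

/-- test interpretation: β-expansions of canonical terms -/
def Jt (γ : ℕ → Ty) : Interp := fun m => {t | ∃ v, Lam.BetaStar t v ∧ Can γ (Ty.var m) v}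

theorem Jt_betaSaturated (γ : ℕ → Ty) (m : ℕ) : BetaSaturated (Jt γ m) := by
  rintro t u htu ⟨v, huv, hcan⟩
  exact ⟨v, htu.trans huv, hcan⟩

/-- fresh-variable availability -/
def FreshCtx (γ : ℕ → Ty) : Prop :=
  ∀ N : Ty, NegTy N → ∀ s : Finset ℕ, ∃ x, γ x = N ∧ x ∉ s

/-- choose a type variable avoiding a finite set -/
theorem exists_fresh_tyvar (s : Finset ℕ) : ∃ Y, Y ∉ s := by
  refine ⟨s.sup id + 1, fun h => ?_⟩
  have := Finset.le_sup (f := id) h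
  simp only [id_eq] at this
  omega

theorem upDown {γ : ℕ → Ty} (hγ : NegCtx γ) (hfresh : FreshCtx γ) :
    ∀ n A, Ty.sizeT A ≤ n →
    ((PosTy A → ∀ u, u ∈ interpC BetaSaturated A (Jt γ) →
        ∃ c, Lam.BetaStar u c ∧ Can γ A c) ∧
     (NegTy A → ∀ p, Can γ A p → Neutral p → p ∈ interpC BetaSaturated A (Jt γ))) := by
  intro n
  induction n with
  | zero =>
      intro A hA
      cases A <;> simp [Ty.sizeT] at hA
  | succ n ih =>
      intro A hA
      constructor
      · -- Up
        intro hpos u hu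
        cases A with
        | var m => exact hu
        | arr N' P'' =>
            have hNP : NegTy N' ∧ PosTy P'' := by cases hpos with | arr h1 h2 => exact ⟨h1, h2⟩
            obtain ⟨x', hx'ty, hx'fv⟩ := hfresh N' hNP.1 u.fv
            have hxmem : Lam.var x' ∈ interpC BetaSaturated N' (Jt γ) := by
              refine (ih N' (by simp [Ty.sizeT] at hA ⊢; omega)).2 hNP.1 _ ?_ (by simp [Neutral])
              rw [← hx'ty]
              exact Can.var γ x'
            have happ : Lam.app u (Lam.var x') ∈ interpC BetaSaturated P'' (Jt γ) :=
              hu _ hxmem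
            obtain ⟨c, hc, hcan⟩ := (ih P'' (by simp [Ty.sizeT] at hA ⊢; omega)).1 hNP.2 _ happ
            rcases Lam.betaStar_app_inv hc with ⟨c₁, c₂, rfl, hu₁, hx₂⟩ |
              ⟨a₁, b₁, hulam, hxb, hsub⟩
            · -- application persists
              have hc₂ : c₂ = Lam.var x' := Lam.betaStar_var_inv hx₂
              subst hc₂
              obtain ⟨Q, hcan1, hneut, hcanx⟩ := can_app_inv hγ hcan
              have hQ : Q = γ x' := can_var_rigid hγ hcanx
              rw [hQ, hx'ty] at hcan1
              exact ⟨c₁, hu₁, hcan1⟩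
            · -- head reduction fired
              have hb₁ : b₁ = Lam.var x' := Lam.betaStar_var_inv hxb
              subst hb₁
              rw [Lam.subst0_var_eq_rename] at hsub
              have hinj : ∀ y ∈ a₁.fv, ∀ z ∈ a₁.fv, Lam.rfor x' y = Lam.rfor x' z → y = z := by
                intro y hy z hz hyz
                have hfva : ∀ w, w + 1 ∈ a₁.fv → w ∈ u.fv := by
                  intro w hw
                  exact Lam.fv_betaStar hulam (Lam.mem_fv_lam.2 hw)
                match y, z with
                | 0, 0 => rfl
                | 0, z+1 =>
                    exfalso
                    simp only [Lam.rfor] at hyz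
                    exact hx'fv (by rw [hyz]; exact hfva z hz)
                | y+1, 0 =>
                    exfalso
                    simp only [Lam.rfor] at hyz
                    exact hx'fv (by rw [← hyz]; exact hfva y hy)
                | y+1, z+1 => simp only [Lam.rfor] at hyz; omega
              obtain ⟨c₀, rfl, hbc₀⟩ := Lam.betaStar_rename_reflect hsub hinj
              -- transport the canonical derivation under the binder
              have hcan' : Can (tcons N' γ) P'' c₀ := by
                have h2 := hcan.rename (tcons N' γ)
                  (fun y => if y = x' then 0 else y + 1) ?_
                · rw [Lam.rename_rename] at h2
                  have : Lam.rename
                      (fun y => (fun z => if z = x' then 0 else z+1) (Lam.rfor x' y)) c₀ = c₀ := by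
                    rw [Lam.rename_congr_fv (ρ' := fun y => y), Lam.rename_id]
                    intro y hy
                    match y with
                    | 0 => simp [Lam.rfor]
                    | y+1 =>
                        have : y ∈ u.fv :=
                          Lam.fv_betaStar hulam (Lam.mem_fv_lam.2 (Lam.fv_betaStar hbc₀ hy))
                        have hne : y ≠ x' := fun h => hx'fv (h ▸ this)
                        simp [Lam.rfor, hne]
                  rwa [this] at h2
                · intro y hy
                  by_cases h : y = x'
                  · subst h; simp only [if_pos rfl]; rw [hx'ty]; rfl
                  · simp only [if_neg h]; rfl
              refine ⟨Lam.lam c₀, ?_, Can.lam hcan'⟩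
              exact hulam.trans (Lam.BetaStar.lam' hbc₀)
        | all P₃ =>
            have hP : PosTy P₃ ∧ 0 ∈ P₃.fv := by cases hpos with | all h1 h2 => exact ⟨h1, h2⟩
            obtain ⟨Y, hY⟩ := exists_fresh_tyvar
              ((Ty.all P₃).fv ∪ u.fv.biUnion (fun x => (γ x).fv))
            simp only [Finset.mem_union, Finset.mem_biUnion, not_or, not_exists] at hY
            have hu' : u ∈ interpC BetaSaturated (P₃.subst 0 (Ty.var Y)) (Jt γ) := by
              rw [interpC_subst_var0]
              simp only [interpC] at hu
              exact Set.mem_iInter.1 (Set.mem_iInter.1 hu (Jt γ Y)) (Jt_betaSaturated γ Y)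
            have hsize : Ty.sizeT (P₃.subst 0 (Ty.var Y)) ≤ n := by
              rw [Ty.sizeT_subst_var]
              simp [Ty.sizeT] at hA
              omega
            obtain ⟨c, hc, hcan⟩ := (ih _ hsize).1 ((Ty.posneg_subst_var P₃ 0 Y).1 hP.1) u hu'
            refine ⟨c, hc, Can.all hP.2 hY.1 ?_ hcan⟩
            intro x hx
            exact (by push_neg at hY; exact hY.2 x (Lam.fv_betaStar hc hx) : Y ∉ (γ x).fv)
      · -- Down
        intro hneg p hcan hneut
        cases A with
        | var m => exact ⟨p, Relation.ReflTransGen.refl, hcan⟩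
        | arr Q C₂ =>
            have hQC : PosTy Q ∧ NegTy C₂ := by cases hneg with | arr h1 h2 => exact ⟨h1, h2⟩
            intro s hs
            obtain ⟨cs, hcs, hcscan⟩ := (ih Q (by simp [Ty.sizeT] at hA ⊢; omega)).1 hQC.1 s hs
            have hcan2 : Can γ C₂ (Lam.app p cs) := Can.app hcan hneut hcscan
            have hmem : Lam.app p cs ∈ interpC BetaSaturated C₂ (Jt γ) :=
              (ih C₂ (by simp [Ty.sizeT] at hA ⊢; omega)).2 hQC.2 _ hcan2 (by simp [Neutral])
            have hβ : BetaSaturated (interpC BetaSaturated C₂ (Jt γ)) :=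
              interpC_betaSaturated C₂ (Jt_betaSaturated γ)
            exact hβ _ _ (Lam.BetaStar.appR' p hcs) hmem
        | all P₃ => cases hneg
/-! ### Readback of canonical terms into saturated interpretations -/

theorem readback {γ : ℕ → Ty} {A : Ty} {v : Lam} (h : Can γ A v) :
    ∀ (I : Interp), (∀ n, Saturated (I n)) →
    ∀ τ : ℕ → Lam, (∀ x ∈ v.fv, τ x ∈ interpC Saturated (γ x) I) →
    ∀ t, Lam.BetaStar t v → Lam.msubst τ t ∈ interpC Saturated A I := by
  induction h with
  | var γ x =>
      intro I hSat τ hτ t ht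
      have hwh : Lam.WhrStar t (Lam.var x) := Lam.extract_var ht
      have hwh2 := hwh.msubst τ
      have hτx : τ x ∈ interpC Saturated (γ x) I := hτ x (by simp [Lam.fv])
      exact interpC_saturated (γ x) hSat _ _ hwh2 hτx
  | app hp hn ha ihp iha =>
      intro I hSat τ hτ t ht
      obtain ⟨p', a', hwh, hpc, hac⟩ := Lam.extract_app ht
      have h1 := ihp I hSat τ (fun x hx => hτ x (by simp [Lam.fv, hx])) p' hpc
      have h2 := iha I hSat τ (fun x hx => hτ x (by simp [Lam.fv, hx])) a' hac
      have h3 : Lam.msubst τ (Lam.app p' a') ∈ interpC Saturated _ I := h1 _ h2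
      exact interpC_saturated _ hSat _ _ (hwh.msubst τ) h3
  | @lam γ N C₀ v₁ hv ih =>
      intro I hSat τ hτ t ht
      intro s hs
      -- apply to a fresh de Bruijn variable 0 after shifting
      have h1 : Lam.BetaStar (Lam.rename Nat.succ t) (Lam.lam (Lam.rename (Lam.upr Nat.succ) v₁)) :=
        ht.rename Nat.succ
      have heq : Lam.subst (Lam.rename (Lam.upr Nat.succ) v₁) 0 (Lam.var 0) = v₁ := by
        rw [Lam.subst0_var_eq_rename, Lam.rename_rename]
        rw [Lam.rename_ext v₁ (ρ' := fun n => n) (by intro m; cases m <;> rfl)]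
        exact Lam.rename_id v₁
      have ht₁ : Lam.BetaStar (Lam.app (Lam.rename Nat.succ t) (Lam.var 0)) v₁ := by
        refine Relation.ReflTransGen.tail (Lam.BetaStar.appL' (Lam.var 0) h1) ?_ |>.trans
          Relation.ReflTransGen.refl
        have := Lam.Beta.beta (Lam.rename (Lam.upr Nat.succ) v₁) (Lam.var 0)
        rwa [heq] at this
      have hτ' : ∀ x ∈ v₁.fv, Lam.scons s τ x ∈ interpC Saturated (tcons N γ x) I := by
        intro x hx
        match x with
        | 0 => exact hs
        | x+1 => exact hτ x (Lam.mem_fv_lam.2 hx)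
      have hmem := ih I hSat (Lam.scons s τ) hτ' _ ht₁
      have hcomp : Lam.msubst (Lam.scons s τ) (Lam.app (Lam.rename Nat.succ t) (Lam.var 0)) =
          Lam.app (Lam.msubst τ t) s := by
        show Lam.app (Lam.msubst _ (Lam.rename Nat.succ t)) _ = _
        rw [Lam.msubst_rename]
        rfl
      rwa [hcomp] at hmem
  | @all γ P₃ Y v h0 hY1 hY2 hcan ih =>
      intro I hSat τ hτ t ht
      simp only [interpC]
      refine Set.mem_iInter.2 (fun G => Set.mem_iInter.2 (fun hG => ?_))
      classical
      set I' : Interp := fun n => if n = Y then G else I n with hI'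
      have hSat' : ∀ n, Saturated (I' n) := by
        intro n
        by_cases h : n = Y
        · simpa [hI', h] using hG
        · simpa [hI', h] using hSat n
      have hτ' : ∀ x ∈ v.fv, τ x ∈ interpC Saturated (γ x) I' := by
        intro x hx
        have he : interpC Saturated (γ x) I' = interpC Saturated (γ x) I := by
          apply interpC_congr
          intro m hm
          have hne : m ≠ Y := fun heq => hY2 x hx (heq ▸ hm)
          simp [hI', hne]
        rw [he]
        exact hτ x hx
      have hmem := ih I' hSat' τ hτ' t ht
      rw [interpC_subst_var0] at hmem
      have hIY : I' Y = G := by simp [hI']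
      rw [hIY] at hmem
      have he2 : interpC Saturated P₃ (Interp.cons G I') = interpC Saturated P₃ (Interp.cons G I) := by
        apply interpC_congr
        intro m hm
        match m with
        | 0 => rfl
        | m+1 =>
            show I' m = I m
            have hne : m ≠ Y := by
              intro heq
              subst heq
              exact hY1 (Ty.mem_fv_all.2 hm)
            simp [hI', hne]
      rw [he2] at hmem
      exact hmem
/-! ### Main lemma: βSat-membership at the test interpretation gives Sat-membership -/

theorem mainLemma {γ : ℕ → Ty} (hγ : NegCtx γ) (hfresh : FreshCtx γ) :
    ∀ n A, Ty.sizeT A ≤ n → PosTy A → ∀ u, u ∈ interpC BetaSaturated A (Jt γ) →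
    ∀ I : Interp, (∀ m, Saturated (I m)) →
    ∀ τ : ℕ → Lam, (∀ x ∈ u.fv, τ x ∈ interpC Saturated (γ x) I) →
    Lam.msubst τ u ∈ interpC Saturated A I := by
  intro n
  induction n with
  | zero => intro A hA; cases A <;> simp [Ty.sizeT] at hA
  | succ n ih =>
      intro A hA hpos u hu I hSat τ hτ
      cases A with
      | var m =>
          obtain ⟨v, huv, hcan⟩ := hu
          exact readback hcan I hSat τ (fun x hx => hτ x (Lam.fv_betaStar huv hx)) u huv
      | arr N' P'' =>
          have hNP : NegTy N' ∧ PosTy P'' := by cases hpos with | arr h1 h2 => exact ⟨h1, h2⟩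
          intro s hs
          obtain ⟨x', hx'ty, hx'fv⟩ := hfresh N' hNP.1 u.fv
          classical
          have hxmem : Lam.var x' ∈ interpC BetaSaturated N' (Jt γ) := by
            refine (upDown hγ hfresh (Ty.sizeT N') N' le_rfl).2 hNP.1 _ ?_ (by simp [Neutral])
            rw [← hx'ty]
            exact Can.var γ x'
          have happ : Lam.app u (Lam.var x') ∈ interpC BetaSaturated P'' (Jt γ) := hu _ hxmem
          set τ' : ℕ → Lam := fun y => if y = x' then s else τ y with hτ'def
          have hτ'ad : ∀ y ∈ (Lam.app u (Lam.var x')).fv,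
              τ' y ∈ interpC Saturated (γ y) I := by
            intro y hy
            by_cases h : y = x'
            · subst h
              simp only [hτ'def, if_pos rfl]
              rw [hx'ty]
              exact hs
            · simp only [hτ'def, if_neg h]
              apply hτ
              simp only [Lam.fv, Finset.mem_union, Finset.mem_singleton] at hy
              rcases hy with hy | hy
              · exact hy
              · exact absurd hy h
          have hmem := ih P'' (by simp [Ty.sizeT] at hA ⊢; omega) hNP.2 _ happ I hSat τ' hτ'ad
          have hcomp : Lam.msubst τ' (Lam.app u (Lam.var x')) = Lam.app (Lam.msubst τ u) s := by
            show Lam.app (Lam.msubst τ' u) (τ' x') = _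
            rw [Lam.msubst_congr_fv (σ' := τ) (fun y hy => by
              have hne : y ≠ x' := fun h => hx'fv (h ▸ hy)
              simp [hτ'def, hne])]
            simp [hτ'def]
          rwa [hcomp] at hmem
      | all P₃ =>
          have hP : PosTy P₃ ∧ 0 ∈ P₃.fv := by cases hpos with | all h1 h2 => exact ⟨h1, h2⟩
          simp only [interpC]
          refine Set.mem_iInter.2 (fun G => Set.mem_iInter.2 (fun hG => ?_))
          obtain ⟨Y, hY⟩ := exists_fresh_tyvar
            ((Ty.all P₃).fv ∪ u.fv.biUnion (fun x => (γ x).fv))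
          simp only [Finset.mem_union, Finset.mem_biUnion, not_or, not_exists] at hY
          have hu' : u ∈ interpC BetaSaturated (P₃.subst 0 (Ty.var Y)) (Jt γ) := by
            rw [interpC_subst_var0]
            simp only [interpC] at hu
            exact Set.mem_iInter.1 (Set.mem_iInter.1 hu (Jt γ Y)) (Jt_betaSaturated γ Y)
          classical
          set I' : Interp := fun m => if m = Y then G else I m with hI'
          have hSat' : ∀ m, Saturated (I' m) := by
            intro m
            by_cases h : m = Y
            · simpa [hI', h] using hG
            · simpa [hI', h] using hSat m
          have hτ' : ∀ x ∈ u.fv, τ x ∈ interpC Saturated (γ x) I' := by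
            intro x hx
            have he : interpC Saturated (γ x) I' = interpC Saturated (γ x) I := by
              apply interpC_congr
              intro m hm
              push_neg at hY
              have hne : m ≠ Y := fun heq => hY.2 x hx (heq ▸ hm)
              simp [hI', hne]
            rw [he]
            exact hτ x hx
          have hsize : Ty.sizeT (P₃.subst 0 (Ty.var Y)) ≤ n := by
            rw [Ty.sizeT_subst_var]
            simp [Ty.sizeT] at hA
            omega
          have hmem := ih _ hsize ((Ty.posneg_subst_var P₃ 0 Y).1 hP.1) u hu' I' hSat' τ hτ'
          rw [interpC_subst_var0] at hmem
          have hIY : I' Y = G := by simp [hI']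
          rw [hIY] at hmem
          have he2 : interpC Saturated P₃ (Interp.cons G I') =
              interpC Saturated P₃ (Interp.cons G I) := by
            apply interpC_congr
            intro m hm
            match m with
            | 0 => rfl
            | m+1 =>
                show I' m = I m
                have hne : m ≠ Y := by
                  intro heq
                  subst heq
                  exact hY.1 (Ty.mem_fv_all.2 hm)
                simp [hI', hne]
          rw [he2] at hmem
          exact hmem

/-! ### The easy direction -/

theorem posneg_interp_mono (A : Ty) :
    (PosTy A → ∀ I, interpC Saturated A I ⊆ interpC BetaSaturated A I) ∧
    (NegTy A → ∀ I, interpC BetaSaturated A I ⊆ interpC Saturated A I) := by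
  induction A with
  | var n => exact ⟨fun _ I t ht => ht, fun _ I t ht => ht⟩
  | arr B D ihB ihD =>
      constructor
      · intro h I u hu
        have hBD : NegTy B ∧ PosTy D := by cases h with | arr h1 h2 => exact ⟨h1, h2⟩
        intro s hs
        exact (ihD.1 hBD.2 I) (hu s ((ihB.2 hBD.1 I) hs))
      · intro h I u hu
        have hBD : PosTy B ∧ NegTy D := by cases h with | arr h1 h2 => exact ⟨h1, h2⟩
        intro s hs
        exact (ihD.2 hBD.2 I) (hu s ((ihB.1 hBD.1 I) hs))
  | all A ih =>
      constructor
      · intro h I u hu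
        have hP : PosTy A := by cases h with | all h1 _ => exact h1
        simp only [interpC] at hu ⊢
        refine Set.mem_iInter.2 (fun G => Set.mem_iInter.2 (fun hG => ?_))
        have hu' := Set.mem_iInter.1 (Set.mem_iInter.1 hu G) (betaSaturated_saturated hG)
        exact (ih.1 hP _) hu'
      · intro h; cases h

/-! ### Enumerating types -/

def tyDecode : ℕ → Ty
  | 0 => Ty.var 0
  | (n+1) =>
      if n % 3 = 0 then Ty.var (n / 3)
      else if n % 3 = 1 then Ty.all (tyDecode (n / 3))
      else Ty.arr (tyDecode (Nat.unpair (n / 3)).1) (tyDecode (Nat.unpair (n / 3)).2)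
decreasing_by
  · have := Nat.div_le_self n 3; omega
  · have h1 := Nat.unpair_left_le (n / 3)
    have := Nat.div_le_self n 3; omega
  · have h1 := Nat.unpair_right_le (n / 3)
    have := Nat.div_le_self n 3; omega

theorem tyDecode_surjective : ∀ C : Ty, ∃ n, tyDecode n = C := by
  intro C
  induction C with
  | var k =>
      refine ⟨3 * k + 1, ?_⟩
      show tyDecode (3 * k + 1) = Ty.var k
      rw [tyDecode]
      have h1 : (3 * k) % 3 = 0 := by omega
      have h2 : (3 * k) / 3 = k := by omega
      simp [h1, h2]
  | all A ih =>
      obtain ⟨a, rfl⟩ := ih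
      refine ⟨3 * a + 1 + 1, ?_⟩
      rw [tyDecode]
      have h1 : (3 * a + 1) % 3 = 1 := by omega
      have h2 : (3 * a + 1) / 3 = a := by omega
      simp [h1, h2]
  | arr A B ihA ihB =>
      obtain ⟨a, rfl⟩ := ihA
      obtain ⟨b, rfl⟩ := ihB
      refine ⟨3 * (Nat.pair a b) + 2 + 1, ?_⟩
      rw [tyDecode]
      have h1 : (3 * (Nat.pair a b) + 2) % 3 = 2 := by omega
      have h2 : (3 * (Nat.pair a b) + 2) / 3 = Nat.pair a b := by omega
      simp [h1, h2, Nat.unpair_pair]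
/-! ### STATEMENT 13 -/

/-- for every ∀⁺ type `A`, the saturated and β-saturated
interpretations of `A` coincide. -/
theorem sem_saturated_eq_betaSaturated (A : Ty) (hA : PosTy A) :
    SemC Saturated A = SemC BetaSaturated A := by
  apply Set.Subset.antisymm
  · -- saturated ⊆ β-saturated
    intro t ht I hI
    have hI' : ∀ n, Saturated (I n) := fun n => betaSaturated_saturated (hI n)
    exact (posneg_interp_mono A).1 hA I (ht I hI')
  · -- β-saturated ⊆ saturated
    intro t ht I hI
    classical
    set B0 : Ty := Ty.arr (Ty.all (Ty.var 0)) (Ty.var 0) with hB0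
    have hB0neg : NegTy B0 := NegTy.arr (PosTy.all (PosTy.var 0) (by simp [Ty.fv])) (NegTy.var 0)
    set γ : ℕ → Ty := fun x =>
      if x ∈ t.fv then B0
      else if NegTy (tyDecode (Nat.unpair x).2) then tyDecode (Nat.unpair x).2 else B0 with hγdef
    have hγ : NegCtx γ := by
      intro x
      simp only [hγdef]
      split_ifs with h1 h2
      · exact hB0neg
      · exact h2
      · exact hB0neg
    have hfresh : FreshCtx γ := by
      intro N hN s
      obtain ⟨e, he⟩ := tyDecode_surjective N
      set k := (s ∪ t.fv).sup id + 1 with hk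
      have hout : ∀ u : Finset ℕ, u ⊆ s ∪ t.fv → Nat.pair k e ∉ u := by
        intro u hu hmem
        have h1 : Nat.pair k e ≤ (s ∪ t.fv).sup id :=
          Finset.le_sup (f := id) (hu hmem)
        have h2 := Nat.left_le_pair k e
        omega
      refine ⟨Nat.pair k e, ?_, hout s Finset.subset_union_left⟩
      have hk2 : Nat.pair k e ∉ t.fv := hout t.fv Finset.subset_union_right
      simp only [hγdef, if_neg hk2, Nat.unpair_pair, he, if_pos hN]
    have hJt : t ∈ interpC BetaSaturated A (Jt γ) := ht (Jt γ) (Jt_betaSaturated γ)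
    have hτ : ∀ x ∈ t.fv, Lam.var x ∈ interpC Saturated (γ x) I := by
      intro x hx
      have hγx : γ x = B0 := by simp [hγdef, hx]
      rw [hγx, hB0]
      simp only [interpC]
      intro s hs
      exfalso
      have hss := Set.mem_iInter.1 (Set.mem_iInter.1 hs (∅ : Set Lam)) saturated_empty
      simpa [interpC, Interp.cons_zero] using hss
    have hmain := mainLemma hγ hfresh (Ty.sizeT A) A le_rfl hA t hJt I hI Lam.var hτ
    rwa [Lam.msubst_var] at hmain
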